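/- The tilted matrices M(q) of W and M̃(F̃ − q) of the HTR generator W̃ are similar matrices, hence have the same characteristic polynomial and the same spectrum; in particular their largest real eigenvalues agree: λ(q) = λ̃(F̃ − q) for all q (the marginal Lebowitz–Spohn symmetry of the scaled cumulant generating functions). -/

import Mathlib

open Matrix Polynomial

lemma my_charpoly_transpose {n : Type*} [DecidableEq n] [Fintype n]
    {R : Type*} [CommRing R] (A : Matrix n n R) : Aᵀ.charpoly = A.charpoly := by
  unfold Matrix.charpoly
  rw [← Matrix.det_transpose]
  congr 1
  ext i j
  by_cases h : i = j
  · subst h; simp [Matrix.charmatrix_apply_eq, Matrix.transpose_apply]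
  · rw [Matrix.transpose_apply, Matrix.charmatrix_apply_ne _ _ _ h,
      Matrix.charmatrix_apply_ne _ _ _ (Ne.symm h), Matrix.transpose_apply]

lemma my_charpoly_conj {n : Type*} [DecidableEq n] [Fintype n]
    {R : Type*} [CommRing R] (P A Q : Matrix n n R) (hPQ : P * Q = 1) :
    (P * A * Q).charpoly = A.charpoly := by
  unfold Matrix.charpoly
  have hPQ' : P.map C * Q.map C = 1 := by
    rw [← Matrix.map_mul, hPQ, Matrix.map_one _ (map_zero C) (map_one C)]
  have key : charmatrix (P * A * Q) = P.map C * charmatrix A * Q.map C := by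
    unfold charmatrix
    rw [Matrix.mul_sub, Matrix.sub_mul]
    congr 1
    · rw [← (Matrix.scalar_commute (X : R[X]) (fun r => Commute.all _ _) (P.map C)).eq,
        Matrix.mul_assoc, hPQ', Matrix.mul_one]
    · simp [RingHom.mapMatrix_apply, Matrix.map_mul]
  have hdet : (P.map C).det * (Q.map C).det = 1 := by
    rw [← Matrix.det_mul, hPQ', Matrix.det_one]
  rw [key, Matrix.det_mul, Matrix.det_mul, mul_right_comm, hdet, one_mul]

lemma my_spectrum_transpose {n : Type*} [DecidableEq n] [Fintype n]
    (A : Matrix n n ℝ) : spectrum ℝ Aᵀ = spectrum ℝ A := by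
  ext x
  rw [spectrum.mem_iff, spectrum.mem_iff]
  have h : algebraMap ℝ (Matrix n n ℝ) x - Aᵀ = (algebraMap ℝ (Matrix n n ℝ) x - A)ᵀ := by
    rw [Matrix.transpose_sub]
    congr 1
    simp [Matrix.algebraMap_eq_diagonal]
  rw [h, Matrix.isUnit_iff_isUnit_det, Matrix.det_transpose, ← Matrix.isUnit_iff_isUnit_det]

/-- marginal Lebowitz–Spohn symmetry: the tilted matrices
`M̃(q)` of the HTR generator and `M(F̃ − q)` of `W` are similar (via `Pst` and
transposition), hence have equal characteristic polynomials and equal spectra;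
in particular their largest real eigenvalues agree: `λ̃(q) = λ(F̃ − q)`. -/
theorem marginal_lebowitz_spohn {m : ℕ}
    (W Wst Wtil : Matrix (Fin (m + 3)) (Fin (m + 3)) ℝ)
    (hoff : ∀ i j : Fin (m + 3), i ≠ j → 0 ≤ W i j)
    (hcol : ∀ j : Fin (m + 3), ∑ i : Fin (m + 3), W i j = 0)
    (h12pos : 0 < W 0 1) (h21pos : 0 < W 1 0)
    (h12 : Wst 0 1 = 0) (h21 : Wst 1 0 = 0)
    (h11 : Wst 0 0 = W 0 0 + W 1 0) (h22 : Wst 1 1 = W 1 1 + W 0 1)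
    (hother : ∀ i j : Fin (m + 3),
      ¬((i = 0 ∧ j = 1) ∨ (i = 1 ∧ j = 0) ∨ (i = 0 ∧ j = 0) ∨ (i = 1 ∧ j = 1)) →
      Wst i j = W i j)
    (pst : Fin (m + 3) → ℝ) (hpst : ∀ i, 0 < pst i)
    (hsteady : Wst.mulVec pst = 0)
    (hWtil : Wtil = W - Wst + Matrix.diagonal pst * Wst.transpose *
        Matrix.diagonal (fun i => (pst i)⁻¹))
    (M Mt : ℝ → Matrix (Fin (m + 3)) (Fin (m + 3)) ℝ)
    (hM : ∀ q, M q = Matrix.of fun i j =>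
      if i = 0 ∧ j = 1 then W 0 1 * Real.exp (-q)
      else if i = 1 ∧ j = 0 then W 1 0 * Real.exp q
      else W i j)
    (hMt : ∀ q, Mt q = Matrix.of fun i j =>
      if i = 0 ∧ j = 1 then Wtil 0 1 * Real.exp (-q)
      else if i = 1 ∧ j = 0 then Wtil 1 0 * Real.exp q
      else Wtil i j)
    (F : ℝ) (hF : F = Real.log (W 0 1 * pst 1 / (W 1 0 * pst 0))) :
    ∀ q : ℝ,
      (Mt q).charpoly = (M (F - q)).charpoly ∧
      spectrum ℝ (Mt q) = spectrum ℝ (M (F - q)) ∧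
      sSup (spectrum ℝ (Mt q)) = sSup (spectrum ℝ (M (F - q))) := by
  intro q
  have h01 : (0 : Fin (m + 3)) ≠ 1 := by simp [Fin.ext_iff]
  have hp0 : pst 0 ≠ 0 := ne_of_gt (hpst 0)
  have hp1 : pst 1 ≠ 0 := ne_of_gt (hpst 1)
  have hW01 : W 0 1 ≠ 0 := ne_of_gt h12pos
  have hW10 : W 1 0 ≠ 0 := ne_of_gt h21pos
  have hexp : Real.exp F = W 0 1 * pst 1 / (W 1 0 * pst 0) := by
    rw [hF]
    exact Real.exp_log (div_pos (mul_pos h12pos (hpst 1)) (mul_pos h21pos (hpst 0)))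
  have hWtilE : ∀ i j, Wtil i j = W i j - Wst i j + pst i * Wst j i * (pst j)⁻¹ := by
    intro i j
    rw [hWtil]
    simp [Matrix.mul_diagonal, Matrix.diagonal_mul, Matrix.sub_apply, Matrix.add_apply,
      Matrix.transpose_apply]
  have hDD' : Matrix.diagonal pst * Matrix.diagonal (fun i => (pst i)⁻¹) = 1 := by
    rw [Matrix.diagonal_mul_diagonal,
      show (fun i => pst i * (pst i)⁻¹) = (fun _ => (1 : ℝ)) from
        funext fun i => mul_inv_cancel₀ (ne_of_gt (hpst i)), Matrix.diagonal_one]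
  have hD'D : Matrix.diagonal (fun i => (pst i)⁻¹) * Matrix.diagonal pst = 1 := by
    rw [Matrix.diagonal_mul_diagonal,
      show (fun i => (pst i)⁻¹ * pst i) = (fun _ => (1 : ℝ)) from
        funext fun i => inv_mul_cancel₀ (ne_of_gt (hpst i)), Matrix.diagonal_one]
  have hsim : Mt q = Matrix.diagonal pst * (M (F - q))ᵀ *
      Matrix.diagonal (fun i => (pst i)⁻¹) := by
    ext i j
    rw [hMt, hM]
    simp only [Matrix.mul_diagonal, Matrix.diagonal_mul, Matrix.transpose_apply,
      Matrix.of_apply]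
    by_cases h1 : i = 0 ∧ j = 1
    · obtain ⟨hi, hj⟩ := h1
      subst hi; subst hj
      rw [if_pos ⟨rfl, rfl⟩, if_neg (fun h => h01 h.1.symm), if_pos ⟨rfl, rfl⟩]
      rw [hWtilE, h12, h21]
      rw [Real.exp_sub, hexp, Real.exp_neg]
      have := Real.exp_ne_zero q
      field_simp
      ring
    · by_cases h2 : i = 1 ∧ j = 0
      · obtain ⟨hi, hj⟩ := h2
        subst hi; subst hj
        rw [if_neg h1, if_pos ⟨rfl, rfl⟩, if_pos ⟨rfl, rfl⟩]
        rw [hWtilE, h21, h12]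
        rw [Real.exp_neg, Real.exp_sub, hexp]
        field_simp
        ring
      · rw [if_neg h1, if_neg h2,
          if_neg (fun h => h2 ⟨h.2, h.1⟩),
          if_neg (fun h => h1 ⟨h.2, h.1⟩)]
        by_cases hij : i = j
        · subst hij
          rw [hWtilE]
          have hpi : pst i ≠ 0 := ne_of_gt (hpst i)
          field_simp
          ring
        · have hs1 : Wst i j = W i j := by
            apply hother
            rintro (h | h | h | h)
            · exact h1 h
            · exact h2 h
            · exact hij (h.1.trans h.2.symm)
            · exact hij (h.1.trans h.2.symm)
          have hs2 : Wst j i = W j i := by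
            apply hother
            rintro (h | h | h | h)
            · exact h2 ⟨h.2, h.1⟩
            · exact h1 ⟨h.2, h.1⟩
            · exact hij (h.2.trans h.1.symm)
            · exact hij (h.2.trans h.1.symm)
          rw [hWtilE, hs1, hs2]
          ring
  have hspec : spectrum ℝ (Mt q) = spectrum ℝ (M (F - q)) := by
    rw [hsim, ← my_spectrum_transpose (M (F - q))]
    exact spectrum.units_conjugate
      (u := ⟨Matrix.diagonal pst, Matrix.diagonal (fun i => (pst i)⁻¹), hDD', hD'D⟩)
  refine ⟨?_, hspec, by rw [hspec]⟩
  rw [hsim, my_charpoly_conj _ _ _ hDD', my_charpoly_transpose]
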